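/- Let g : F_2^{4n} → F_2 be the polynomial g(x,y,z,u) = Σ_{j=1}^n x_j y_j z_j + B(x) + Σ_k u_k (Σ_j a_{kj} x_j) where B has degree at most 2 and A = (a_{kj}) is a Boolean matrix. Then g has degree at most 3, and the sign of Δg equals the sign of the quadratically signed weight enumerator S(A,B) = Σ_{Ax=0} (−1)^{B(x)} 2^{|x|} 4^{n−|x|}. -/

import Mathlib

open Finset

def chi (a : ZMod 2) : ℤ := (-1)^a.val
lemma chi_add (a b : ZMod 2) : chi (a+b) = chi a * chi b := by revert a b; decide
lemma chi_sum {ι : Type*} (s : Finset ι) (f : ι → ZMod 2) :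
    chi (∑ i ∈ s, f i) = ∏ i ∈ s, chi (f i) := by
  induction s using Finset.cons_induction with
  | empty => simp [chi]
  | cons a s ha ih => rw [Finset.sum_cons, Finset.prod_cons, chi_add, ih]
lemma sum_u (c : ZMod 2) : ∑ t : ZMod 2, chi (c * t) = if c = 0 then 2 else 0 := by
  revert c; decide
lemma sum_yz (a : ZMod 2) : ∑ s : ZMod 2, ∑ t : ZMod 2, chi (a * s * t) = if a = 0 then 4 else 2 := by
  revert a; decide
lemma exchange {ι : Type*} [Fintype ι] [DecidableEq ι] (F : ι → ZMod 2 → ℤ) :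
    ∑ u : ι → ZMod 2, ∏ k, F k (u k) = ∏ k, ∑ t : ZMod 2, F k t := by
  rw [Finset.prod_univ_sum]
  simp [Fintype.piFinset_univ]
lemma split {α β R M : Type*} [Fintype α] [Fintype β] [DecidableEq α] [DecidableEq β] [Fintype R] [DecidableEq R]
    [AddCommMonoid M] (f : (α ⊕ β → R) → M) :
    ∑ w : α ⊕ β → R, f w = ∑ x : α → R, ∑ y : β → R, f (Sum.elim x y) := by
  rw [← Equiv.sum_comp (Equiv.sumArrowEquivProdArrow α β R).symm f, Fintype.sum_prod_type]
  rfl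

lemma usum {n : ℕ} (c : Fin n → ZMod 2) :
    ∑ u : Fin n → ZMod 2, chi (∑ k, u k * c k) = if c = 0 then 2^n else 0 := by
  simp_rw [chi_sum, mul_comm]
  rw [exchange (fun k t => chi (c k * t))]
  simp_rw [sum_u]
  by_cases h : c = 0
  · simp [h]
  · rw [if_neg h]
    obtain ⟨k, hk⟩ := Function.ne_iff.mp h
    exact Finset.prod_eq_zero (Finset.mem_univ k) (by simpa using hk)

lemma yzsum {n : ℕ} (x : Fin n → ZMod 2) :
    ∑ y : Fin n → ZMod 2, ∑ z : Fin n → ZMod 2, chi (∑ j, x j * y j * z j)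
      = ∏ j, (if x j = 0 then (4:ℤ) else 2) := by
  simp_rw [chi_sum]
  have h1 : ∀ y : Fin n → ZMod 2, ∑ z : Fin n → ZMod 2, ∏ j, chi (x j * y j * z j)
      = ∏ j, ∑ t : ZMod 2, chi (x j * y j * t) := fun y => exchange (fun j t => chi (x j * y j * t))
  simp only [h1]
  rw [exchange (fun j s => ∑ t : ZMod 2, chi (x j * s * t))]
  simp_rw [sum_yz]

lemma prod_pow' {n : ℕ} (x : Fin n → ZMod 2) :
    ∏ j, (if x j = 0 then (4:ℤ) else 2)
      = 2 ^ (Finset.univ.filter (fun j => x j = 1)).card *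
        4 ^ (n - (Finset.univ.filter (fun j => x j = 1)).card) := by
  have hiff : ∀ a : ZMod 2, (¬ a = 0) ↔ a = 1 := by decide
  rw [Finset.prod_ite, Finset.prod_const, Finset.prod_const]
  have he : Finset.univ.filter (fun j => ¬ x j = 0) = Finset.univ.filter (fun j => x j = 1) := by
    apply Finset.filter_congr; intro j _; simp [hiff]
  have hc := Finset.card_filter_add_card_filter_not (s := (Finset.univ : Finset (Fin n)))
    (p := fun j => x j = 0)
  rw [he] at hc
  simp only [Finset.card_univ, Fintype.card_fin] at hc
  rw [he, mul_comm]
  have h2 : (Finset.univ.filter (fun j => x j = 0)).card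
      = n - (Finset.univ.filter (fun j => x j = 1)).card := by omega
  rw [h2]

open MvPolynomial in
theorem stmt_19 (n : ℕ) (A : Matrix (Fin n) (Fin n) (ZMod 2))
    (B : MvPolynomial (Fin n) (ZMod 2)) (hB : B.totalDegree ≤ 2)
    (g : MvPolynomial (Fin n ⊕ Fin n ⊕ Fin n ⊕ Fin n) (ZMod 2))
    (hg : g = (∑ j, X (Sum.inl j) * X (Sum.inr (Sum.inl j)) * X (Sum.inr (Sum.inr (Sum.inl j))))
        + MvPolynomial.rename Sum.inl B
        + ∑ k, X (Sum.inr (Sum.inr (Sum.inr k))) * ∑ j, C (A k j) * X (Sum.inl j)) :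
    g.totalDegree ≤ 3 ∧
    Int.sign (∑ w : (Fin n ⊕ Fin n ⊕ Fin n ⊕ Fin n) → ZMod 2, (-1 : ℤ) ^ (eval w g).val) =
      Int.sign (∑ x ∈ Finset.univ.filter (fun x : Fin n → ZMod 2 => A.mulVec x = 0),
        (-1 : ℤ) ^ (eval x B).val *
          2 ^ (Finset.univ.filter (fun j => x j = 1)).card *
          4 ^ (n - (Finset.univ.filter (fun j => x j = 1)).card)) := by
  subst hg
  constructor
  · -- degree bound
    refine le_trans (MvPolynomial.totalDegree_add _ _)
      (max_le (le_trans (MvPolynomial.totalDegree_add _ _) (max_le ?_ ?_)) ?_)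
    · refine (MvPolynomial.totalDegree_finset_sum _ _).trans (Finset.sup_le fun j _ => ?_)
      calc ((X (Sum.inl j) * X (Sum.inr (Sum.inl j)) * X (Sum.inr (Sum.inr (Sum.inl j)))) :
              MvPolynomial (Fin n ⊕ Fin n ⊕ Fin n ⊕ Fin n) (ZMod 2)).totalDegree
          ≤ ((X (Sum.inl j) * X (Sum.inr (Sum.inl j))) :
              MvPolynomial (Fin n ⊕ Fin n ⊕ Fin n ⊕ Fin n) (ZMod 2)).totalDegree
            + (X (Sum.inr (Sum.inr (Sum.inl j))) : MvPolynomial _ (ZMod 2)).totalDegree :=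
            MvPolynomial.totalDegree_mul _ _
        _ ≤ ((X (Sum.inl j) : MvPolynomial _ (ZMod 2)).totalDegree
            + (X (Sum.inr (Sum.inl j)) : MvPolynomial _ (ZMod 2)).totalDegree)
            + (X (Sum.inr (Sum.inr (Sum.inl j))) : MvPolynomial _ (ZMod 2)).totalDegree :=
            add_le_add (MvPolynomial.totalDegree_mul _ _) le_rfl
        _ ≤ 3 := by simp [MvPolynomial.totalDegree_X]
    · exact le_trans (MvPolynomial.totalDegree_rename_le _ _) (hB.trans (by norm_num))
    · refine (MvPolynomial.totalDegree_finset_sum _ _).trans (Finset.sup_le fun k _ => ?_)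
      refine le_trans (MvPolynomial.totalDegree_mul _ _) ?_
      have h2 : ((∑ j, C (A k j) * X (Sum.inl j)) :
          MvPolynomial (Fin n ⊕ Fin n ⊕ Fin n ⊕ Fin n) (ZMod 2)).totalDegree ≤ 1 := by
        refine (MvPolynomial.totalDegree_finset_sum _ _).trans (Finset.sup_le fun j _ => ?_)
        refine le_trans (MvPolynomial.totalDegree_mul _ _) ?_
        simp [MvPolynomial.totalDegree_X, MvPolynomial.totalDegree_C]
      have h1 : ((X (Sum.inr (Sum.inr (Sum.inr k)))) :
          MvPolynomial (Fin n ⊕ Fin n ⊕ Fin n ⊕ Fin n) (ZMod 2)).totalDegree = 1 :=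
        MvPolynomial.totalDegree_X _
      omega
  · -- sign computation
    have hchi : ∀ a : ZMod 2, (-1:ℤ)^a.val = chi a := fun _ => rfl
    simp_rw [hchi]
    set P := (∑ j, X (Sum.inl j) * X (Sum.inr (Sum.inl j)) * X (Sum.inr (Sum.inr (Sum.inl j))))
        + MvPolynomial.rename Sum.inl B
        + ∑ k, X (Sum.inr (Sum.inr (Sum.inr k))) * ∑ j, C (A k j) * X (Sum.inl j) with hP
    have heval : ∀ (x y z u : Fin n → ZMod 2),
        eval (Sum.elim x (Sum.elim y (Sum.elim z u))) P
          = ((∑ j, x j * y j * z j) + eval x B) + ∑ k, u k * ∑ j, A k j * x j := by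
      intro x y z u
      simp [hP, MvPolynomial.eval_rename, Sum.elim_comp_inl, map_sum, add_assoc]
    have hmv : ∀ x : Fin n → ZMod 2, (fun k => ∑ j, A k j * x j) = A.mulVec x := fun _ => rfl
    have key : (∑ w : (Fin n ⊕ Fin n ⊕ Fin n ⊕ Fin n) → ZMod 2, chi (eval w P))
        = 2^n * ∑ x ∈ Finset.univ.filter (fun x : Fin n → ZMod 2 => A.mulVec x = 0),
            chi (eval x B) * 2 ^ (Finset.univ.filter (fun j => x j = 1)).card *
              4 ^ (n - (Finset.univ.filter (fun j => x j = 1)).card) := by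
      simp only [split]
      simp_rw [heval, chi_add]
      have hx : ∀ x : Fin n → ZMod 2,
          (∑ y : Fin n → ZMod 2, ∑ z : Fin n → ZMod 2, ∑ u : Fin n → ZMod 2,
            chi (∑ j, x j * y j * z j) * chi (eval x B) * chi (∑ k, u k * ∑ j, A k j * x j))
          = (if A.mulVec x = 0 then (2:ℤ)^n else 0) *
              (chi (eval x B) * (2 ^ (Finset.univ.filter (fun j => x j = 1)).card *
                4 ^ (n - (Finset.univ.filter (fun j => x j = 1)).card))) := by
        intro x
        calc (∑ y : Fin n → ZMod 2, ∑ z : Fin n → ZMod 2, ∑ u : Fin n → ZMod 2,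
              chi (∑ j, x j * y j * z j) * chi (eval x B) * chi (∑ k, u k * ∑ j, A k j * x j))
            = ∑ y : Fin n → ZMod 2, ∑ z : Fin n → ZMod 2,
              (chi (∑ j, x j * y j * z j) * chi (eval x B)) *
                ∑ u : Fin n → ZMod 2, chi (∑ k, u k * ∑ j, A k j * x j) := by
              simp_rw [← Finset.mul_sum]
          _ = ∑ y : Fin n → ZMod 2, ∑ z : Fin n → ZMod 2,
              chi (∑ j, x j * y j * z j) *
                (chi (eval x B) * (if A.mulVec x = 0 then (2:ℤ)^n else 0)) := by
              rw [show (∑ u : Fin n → ZMod 2, chi (∑ k, u k * ∑ j, A k j * x j))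
                = if A.mulVec x = 0 then (2:ℤ)^n else 0 by rw [usum, hmv]]
              simp_rw [mul_assoc]
          _ = (∑ y : Fin n → ZMod 2, ∑ z : Fin n → ZMod 2, chi (∑ j, x j * y j * z j)) *
              (chi (eval x B) * (if A.mulVec x = 0 then (2:ℤ)^n else 0)) := by
              simp_rw [← Finset.sum_mul]
          _ = _ := by rw [yzsum, prod_pow']; ring
      simp_rw [hx]
      simp_rw [ite_mul, zero_mul, ← Finset.sum_filter]
      rw [Finset.mul_sum]
      exact Finset.sum_congr rfl (fun x _ => by ring)
    rw [key, Int.sign_mul,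
      Int.sign_eq_one_of_pos (a := (2:ℤ)^n) (by positivity), one_mul]
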